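/- arXiv:2007.12509 — 11 statements merged into one kernel-verified Lean document; each statement's English description precedes it below -/
import Mathlib

section
/- The sets of maximizers of the two functions a ↦ q(a) + c·π_θ(a)·√N/(1 + n(a)) and a ↦ π_θ(a)·(1/π̂(a) − 1/π̄(a)) over 𝒜 coincide. (Equivalently, AlphaZero's action selection formula can be rewritten as argmax_a π_θ(a)·(1/π̂(a) − 1/π̄(a)).) -/
/-- AlphaZero's action selection formula rewritten: the maximizers of
`a ↦ q a + c·πθ a·√N/(1 + n a)` coincide with the maximizers of
`a ↦ πθ a · (1/π̂ a − 1/π̄ a)`. -/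
theorem alphazero_selection_rewrite
    {A : Type*} [Fintype A] [Nonempty A]
    (n q piTheta : A → ℝ) (c α : ℝ)
    (hn : ∀ b, 0 ≤ n b)
    (hN : 0 < ∑ b, n b)
    (hc : 0 < c)
    (hpiTheta : ∀ a, 0 < piTheta a)
    (hpiThetaSum : ∑ a, piTheta a = 1)
    (hα : ∀ b, q b < α)
    (lam : ℝ)
    (hlam : lam = c * Real.sqrt (∑ b, n b) / ((Fintype.card A : ℝ) + ∑ b, n b))
    (pihat pibar : A → ℝ)
    (hpihat : ∀ a, pihat a = (1 + n a) / ((Fintype.card A : ℝ) + ∑ b, n b))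
    (hpibar : ∀ a, pibar a = lam * piTheta a / (α - q a))
    (hpibarSum : ∑ a, pibar a = 1) :
    {a | ∀ b, q b + c * piTheta b * Real.sqrt (∑ b', n b') / (1 + n b)
          ≤ q a + c * piTheta a * Real.sqrt (∑ b', n b') / (1 + n a)}
    = {a | ∀ b, piTheta b * (1 / pihat b - 1 / pibar b)
          ≤ piTheta a * (1 / pihat a - 1 / pibar a)} := by
  have hcard : (0:ℝ) < (Fintype.card A : ℝ) := by
    exact_mod_cast Fintype.card_pos
  have hden : (0:ℝ) < (Fintype.card A : ℝ) + ∑ b, n b := by linarith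
  have hsq : 0 < Real.sqrt (∑ b, n b) := Real.sqrt_pos.mpr hN
  have hlampos : 0 < lam := by rw [hlam]; positivity
  have key : ∀ x, q x + c * piTheta x * Real.sqrt (∑ b', n b') / (1 + n x)
      = lam * (piTheta x * (1 / pihat x - 1 / pibar x)) + α := by
    intro x
    have h1 : 0 < 1 + n x := by linarith [hn x]
    have h2 : 0 < α - q x := by linarith [hα x]
    have hp := hpiTheta x
    rw [hpihat, hpibar, hlam]
    field_simp
    ring
  ext a
  simp only [Set.mem_setOf_eq]
  constructor <;> intro h b <;> have hb := h b <;> rw [key a, key b] at * <;>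
    [skip; skip] <;>
    first
      | exact le_of_mul_le_mul_left (by linarith) hlampos
      | nlinarith [mul_le_mul_of_nonneg_left hb hlampos.le]
end

section
/- Proposition 1: An action a* maximizes AlphaZero's selection criterion a ↦ q(a) + c·π_θ(a)·√N/(1 + n(a)) over 𝒜 if and only if a* maximizes a ↦ ∂/∂n(a) [ q·π̂(m) − λ_N·KL[π_θ, π̂(m)] ] evaluated at m = n, where the counts m : 𝒜 → ℝ are extended to real values, π̂(m)(b) = (1 + m(b))/(|𝒜| + ∑_c m(c)), the partial derivative is taken coordinatewise in m(a), and the multiplier λ_N = c·√N/(|𝒜| + N) is held fixed at its value at m = n. -/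
private lemma az_div_aux (P M D d : ℝ) (hP : P ≠ 0) (hM : M ≠ 0) (hD : D ≠ 0) :
    P * (1/D - d/M) = P * ((0 * (M/D) - P * ((d*D - M)/D^2)) / (M/D)^2 / (P/(M/D))) := by
  rw [div_div_eq_mul_div, zero_mul, zero_sub, div_pow]
  field_simp
  ring

/-- Proposition 1: `a*` maximizes AlphaZero's selection criterion iff it maximizes the
partial derivative (w.r.t. real-valued counts, at the current counts, with `λ_N` held
fixed) of the regularized objective `q·π̂(m) − λ_N·KL[πθ, π̂(m)]`. -/
theorem alphazero_selection_is_gradient_ascent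
    {A : Type*} [Fintype A] [Nonempty A] [DecidableEq A]
    (n q piTheta : A → ℝ) (c : ℝ)
    (hn : ∀ b, 0 ≤ n b)
    (hc : 0 < c)
    (hpiTheta : ∀ a, 0 < piTheta a)
    (hpiThetaSum : ∑ a, piTheta a = 1)
    (lam : ℝ)
    (hlam : lam = c * Real.sqrt (∑ b, n b) / ((Fintype.card A : ℝ) + ∑ b, n b))
    (g : A → ℝ)
    (hg : ∀ a, g a = deriv (fun t : ℝ =>
        (∑ b, q b * ((1 + Function.update n a t b) /
            ((Fintype.card A : ℝ) + ∑ c', Function.update n a t c')))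
        - lam * ∑ b, piTheta b * Real.log (piTheta b /
            ((1 + Function.update n a t b) /
              ((Fintype.card A : ℝ) + ∑ c', Function.update n a t c')))) (n a))
    (astar : A) :
    (∀ b, q b + c * piTheta b * Real.sqrt (∑ b', n b') / (1 + n b)
        ≤ q astar + c * piTheta astar * Real.sqrt (∑ b', n b') / (1 + n astar))
    ↔ (∀ b, g b ≤ g astar) := by
  classical
  set K : ℝ := (Fintype.card A : ℝ) with hK
  set S : ℝ := ∑ b, n b with hSdef
  have hS0 : 0 ≤ S := Finset.sum_nonneg fun b _ => hn b
  have hK1 : (1:ℝ) ≤ K := by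
    have := Fintype.card_pos (α := A)
    rw [hK]; exact_mod_cast this
  have hD : 0 < K + S := by linarith
  have hDne : K + S ≠ 0 := ne_of_gt hD
  have hnb : ∀ b, (0:ℝ) < 1 + n b := fun b => by have := hn b; linarith
  have hnbne : ∀ b, (1:ℝ) + n b ≠ 0 := fun b => ne_of_gt (hnb b)
  -- the main computation of the derivative
  have hmain : ∀ a, g a =
      (q a + c * piTheta a * Real.sqrt S / (1 + n a)) / (K + S)
        + (-(∑ b, q b * (1 + n b)) / (K + S) ^ 2 - lam / (K + S)) := by
    intro a
    have hupd : Function.update n a (n a) = n := Function.update_eq_self a n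
    have hu : ∀ b, HasDerivAt (fun t => Function.update n a t b)
        (if b = a then (1:ℝ) else 0) (n a) := by
      intro b
      simp only [Function.update_apply]
      by_cases h : b = a
      · simp only [h, if_true]; exact hasDerivAt_id _
      · simp only [h, if_false]; exact hasDerivAt_const _ _
    have hd : HasDerivAt (fun t => K + ∑ c', Function.update n a t c') 1 (n a) := by
      have h1 : HasDerivAt (fun t => ∑ c', Function.update n a t c')
          (∑ c' : A, if c' = a then (1:ℝ) else 0) (n a) :=
        HasDerivAt.fun_sum fun b _ => hu b
      have h2 : (∑ c' : A, if c' = a then (1:ℝ) else 0) = 1 := by simp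
      rw [h2] at h1
      simpa using (hasDerivAt_const (n a) K).fun_add h1
    have hdne : (K + ∑ c', Function.update n a (n a) c') ≠ 0 := by
      rw [hupd]; exact hDne
    -- the ratio π̂(m)(b) as a function of t
    have hr : ∀ b, HasDerivAt (fun t => (1 + Function.update n a t b) /
        (K + ∑ c', Function.update n a t c'))
        (((if b = a then (1:ℝ) else 0) * (K + S) - (1 + n b)) / (K + S) ^ 2) (n a) := by
      intro b
      have hnum : HasDerivAt (fun t => 1 + Function.update n a t b)
          (if b = a then (1:ℝ) else 0) (n a) := by
        simpa using (hasDerivAt_const (n a) (1:ℝ)).fun_add (hu b)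
      have := hnum.fun_div hd hdne
      refine this.congr_deriv ?_
      simp only [hupd, hSdef]
      ring
    have hrvalne : ∀ b, ((1 + Function.update n a (n a) b) /
        (K + ∑ c', Function.update n a (n a) c')) ≠ 0 := by
      intro b
      rw [hupd]
      exact div_ne_zero (hnbne b) hDne
    -- first sum
    have H1 : HasDerivAt (fun t => ∑ b, q b * ((1 + Function.update n a t b) /
        (K + ∑ c', Function.update n a t c')))
        (∑ b, q b * (((if b = a then (1:ℝ) else 0) * (K + S) - (1 + n b)) / (K + S) ^ 2))
        (n a) :=
      HasDerivAt.fun_sum fun b _ => (hr b).const_mul (q b)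
    -- second sum
    have H2 : ∀ b, HasDerivAt (fun t => piTheta b * Real.log (piTheta b /
        ((1 + Function.update n a t b) / (K + ∑ c', Function.update n a t c'))))
        (piTheta b * (1 / (K + S) - (if b = a then (1:ℝ) else 0) / (1 + n b))) (n a) := by
      intro b
      have hinner : HasDerivAt (fun t => piTheta b /
          ((1 + Function.update n a t b) / (K + ∑ c', Function.update n a t c')))
          ((0 * ((1 + Function.update n a (n a) b) / (K + ∑ c', Function.update n a (n a) c'))
            - piTheta b * (((if b = a then (1:ℝ) else 0) * (K + S) - (1 + n b)) / (K + S) ^ 2))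
            / ((1 + Function.update n a (n a) b) / (K + ∑ c', Function.update n a (n a) c')) ^ 2)
          (n a) :=
        (hasDerivAt_const (n a) (piTheta b)).div (hr b) (hrvalne b)
      have hlogne : piTheta b / ((1 + Function.update n a (n a) b) /
          (K + ∑ c', Function.update n a (n a) c')) ≠ 0 :=
        div_ne_zero (ne_of_gt (hpiTheta b)) (hrvalne b)
      have hlog := hinner.log hlogne
      have := hlog.const_mul (piTheta b)
      refine this.congr_deriv ?_
      simp only [hupd]
      exact (az_div_aux (piTheta b) (1 + n b) (K + S) _ (ne_of_gt (hpiTheta b)) (hnbne b) hDne).symm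
    have HF : HasDerivAt (fun t : ℝ =>
        (∑ b, q b * ((1 + Function.update n a t b) /
            (K + ∑ c', Function.update n a t c')))
        - lam * ∑ b, piTheta b * Real.log (piTheta b /
            ((1 + Function.update n a t b) /
              (K + ∑ c', Function.update n a t c'))))
        ((∑ b, q b * (((if b = a then (1:ℝ) else 0) * (K + S) - (1 + n b)) / (K + S) ^ 2))
          - lam * ∑ b, piTheta b * (1 / (K + S) - (if b = a then (1:ℝ) else 0) / (1 + n b)))
        (n a) :=
      H1.sub ((HasDerivAt.fun_sum fun b _ => H2 b).const_mul lam)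
    rw [hg a, HF.deriv]
    -- now simplify the sums
    have e1 : (∑ b, q b * (((if b = a then (1:ℝ) else 0) * (K + S) - (1 + n b)) / (K + S) ^ 2))
        = q a / (K + S) - (∑ b, q b * (1 + n b)) / (K + S) ^ 2 := by
      have : ∀ b ∈ Finset.univ, q b * (((if b = a then (1:ℝ) else 0) * (K + S) - (1 + n b)) / (K + S) ^ 2)
          = (if b = a then q b / (K + S) else 0) - q b * (1 + n b) / (K + S) ^ 2 := by
        intro b _
        by_cases h : b = a
        · simp only [h, if_true]; field_simp
        · simp only [h, if_false]; field_simp; ring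
      rw [Finset.sum_congr rfl this, Finset.sum_sub_distrib,
        Finset.sum_ite_eq' Finset.univ a (fun b => q b / (K + S))]
      simp [Finset.sum_div]
    have e2 : (∑ b, piTheta b * (1 / (K + S) - (if b = a then (1:ℝ) else 0) / (1 + n b)))
        = 1 / (K + S) - piTheta a / (1 + n a) := by
      have : ∀ b ∈ Finset.univ, piTheta b * (1 / (K + S) - (if b = a then (1:ℝ) else 0) / (1 + n b))
          = piTheta b * (1 / (K + S)) - (if b = a then piTheta b / (1 + n b) else 0) := by
        intro b _
        by_cases h : b = a
        · simp only [h, if_true]; ring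
        · simp only [h, if_false]; ring
      rw [Finset.sum_congr rfl this, Finset.sum_sub_distrib,
        Finset.sum_ite_eq' Finset.univ a (fun b => piTheta b / (1 + n b)),
        ← Finset.sum_mul, hpiThetaSum]
      simp
    rw [e1, e2, hlam]
    field_simp
    ring
  -- conclude
  constructor
  · intro h b
    rw [hmain b, hmain astar]
    have := h b
    have h2 : (q b + c * piTheta b * Real.sqrt S / (1 + n b)) / (K + S)
        ≤ (q astar + c * piTheta astar * Real.sqrt S / (1 + n astar)) / (K + S) :=
      (div_le_div_iff_of_pos_right hD).mpr this
    linarith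
  · intro h b
    have := h b
    rw [hmain b, hmain astar] at this
    have h2 : (q b + c * piTheta b * Real.sqrt S / (1 + n b)) / (K + S)
        ≤ (q astar + c * piTheta astar * Real.sqrt S / (1 + n astar)) / (K + S) := by
      linarith
    exact (div_le_div_iff_of_pos_right hD).mp h2
end

section
/- Proposition 2: If a* maximizes AlphaZero's selection criterion a ↦ q(a) + c·π_θ(a)·√N/(1 + n(a)) over 𝒜, then π̂(a*) ≤ π̄(a*). -/
/-- Proposition 2: if `a*` maximizes AlphaZero's selection criterion, then
`π̂(a*) ≤ π̄(a*)`. -/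
theorem alphazero_pihat_le_pibar
    {A : Type*} [Fintype A] [Nonempty A]
    (n q piTheta : A → ℝ) (c α : ℝ)
    (hn : ∀ b, 0 ≤ n b)
    (hN : 0 < ∑ b, n b)
    (hc : 0 < c)
    (hpiTheta : ∀ a, 0 < piTheta a)
    (hpiThetaSum : ∑ a, piTheta a = 1)
    (hα : ∀ b, q b < α)
    (lam : ℝ)
    (hlam : lam = c * Real.sqrt (∑ b, n b) / ((Fintype.card A : ℝ) + ∑ b, n b))
    (pihat pibar : A → ℝ)
    (hpihat : ∀ a, pihat a = (1 + n a) / ((Fintype.card A : ℝ) + ∑ b, n b))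
    (hpibar : ∀ a, pibar a = lam * piTheta a / (α - q a))
    (hpibarSum : ∑ a, pibar a = 1)
    (astar : A)
    (hastar : ∀ b, q b + c * piTheta b * Real.sqrt (∑ b', n b') / (1 + n b)
        ≤ q astar + c * piTheta astar * Real.sqrt (∑ b', n b') / (1 + n astar)) :
    pihat astar ≤ pibar astar := by
  set N : ℝ := ∑ b, n b with hNdef
  have hKpos : (0:ℝ) < (Fintype.card A : ℝ) := by
    exact_mod_cast Fintype.card_pos
  have hS : (0:ℝ) < (Fintype.card A : ℝ) + N := by linarith
  have hsq : 0 < Real.sqrt N := Real.sqrt_pos.mpr hN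
  set sq : ℝ := Real.sqrt N with hsqdef
  have hpihatSum : ∑ a, pihat a = 1 := by
    have : ∑ a, pihat a = (∑ a, (1 + n a)) / ((Fintype.card A : ℝ) + N) := by
      rw [Finset.sum_div]; exact Finset.sum_congr rfl fun a _ => hpihat a
    rw [this, Finset.sum_add_distrib]
    simp only [Finset.sum_const, Finset.card_univ, nsmul_eq_mul, mul_one]
    rw [← hNdef]
    field_simp
  by_contra hcon
  push_neg at hcon
  obtain ⟨b, hb⟩ : ∃ b, pihat b < pibar b := by
    by_contra hall
    push_neg at hall
    have : ∑ a, pibar a < ∑ a, pihat a :=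
      Finset.sum_lt_sum (fun a _ => hall a) ⟨astar, Finset.mem_univ _, hcon⟩
    rw [hpibarSum, hpihatSum] at this
    exact lt_irrefl 1 this
  have h1b : (0:ℝ) < 1 + n b := by have := hn b; linarith
  have h1a : (0:ℝ) < 1 + n astar := by have := hn astar; linarith
  have hαb : 0 < α - q b := by have := hα b; linarith
  have hαa : 0 < α - q astar := by have := hα astar; linarith
  rw [hpihat, hpibar, hlam] at hb hcon
  have hπb := hpiTheta b
  have hπa := hpiTheta astar
  -- from hb : (1+n b)*(α-q b) < c*sq*piTheta b
  have key1 : (1 + n b) * (α - q b) < c * sq * piTheta b := by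
    rw [div_lt_div_iff₀ hS hαb] at hb
    have e : c * sq / ((Fintype.card A : ℝ) + N) * piTheta b * ((Fintype.card A : ℝ) + N)
        = c * sq * piTheta b := by field_simp
    linarith [hb, e.ge, e.le]
  have key2 : c * sq * piTheta astar < (1 + n astar) * (α - q astar) := by
    rw [div_lt_div_iff₀ hαa hS] at hcon
    have e : c * sq / ((Fintype.card A : ℝ) + N) * piTheta astar * ((Fintype.card A : ℝ) + N)
        = c * sq * piTheta astar := by field_simp
    linarith [hcon, e.ge, e.le]
  have k1 : α < q b + c * piTheta b * sq / (1 + n b) := by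
    rw [← sub_lt_iff_lt_add', lt_div_iff₀ h1b]
    nlinarith [key1]
  have k2 : q astar + c * piTheta astar * sq / (1 + n astar) < α := by
    rw [← lt_sub_iff_add_lt', div_lt_iff₀ h1a]
    nlinarith [key2]
  linarith [hastar b]
end

section
/- Proposition 3 (second identity, UCT): An action a* maximizes the UCT selection criterion a ↦ q(a) + c·√(π_θ(a)·log(N)/(1 + n(a))) over 𝒜 if and only if a* maximizes a ↦ ∂/∂n(a) [ q·π̂(m) − λ_N^UCT·D(π_θ, π̂(m)) ] evaluated at m = n, where the counts m : 𝒜 → ℝ are extended to real values, π̂(m)(b) = (1 + m(b))/(|𝒜| + ∑_c m(c)), D(x, y) = 2 − 2·∑_a √(x(a)·y(a)), the partial derivative is taken coordinatewise in m(a), and λ_N^UCT = c·√(log(N)/(|𝒜| + N)) is held fixed at its value at m = n. -/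
lemma uct_aux_deriv (qa Qr pa P Ka lam t0 : ℝ) (ht0 : 0 ≤ t0) (hKa : 0 < Ka) :
    deriv (fun t => (qa * (1+t) + Qr)/(Ka + t)
        - lam * (2 - 2*((Real.sqrt pa * Real.sqrt (1+t) + P)/Real.sqrt (Ka + t)))) t0
    = (qa + lam * Real.sqrt (Ka + t0) * (Real.sqrt pa / Real.sqrt (1+t0)))/(Ka + t0)
      - (qa*(1+t0)+Qr)/(Ka+t0)^2
      - lam*(Real.sqrt pa * Real.sqrt (1+t0) + P)/((Ka+t0)*Real.sqrt (Ka+t0)) := by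
  have hd0 : 0 < Ka + t0 := by linarith
  have h1t0 : 0 < 1 + t0 := by linarith
  have hsT : 0 < Real.sqrt (Ka + t0) := Real.sqrt_pos.mpr hd0
  have hsn : 0 < Real.sqrt (1 + t0) := Real.sqrt_pos.mpr h1t0
  have hsT2 : Real.sqrt (Ka + t0) ^ 2 = Ka + t0 := Real.sq_sqrt hd0.le
  have h1 : HasDerivAt (fun t : ℝ => qa * (1+t) + Qr) qa t0 := by
    simpa using (((hasDerivAt_id t0).const_add 1).const_mul qa).add_const Qr
  have h2 : HasDerivAt (fun t : ℝ => Ka + t) 1 t0 := (hasDerivAt_id t0).const_add Ka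
  have hA := h1.div h2 hd0.ne'
  have h3 : HasDerivAt (fun t : ℝ => Real.sqrt (1+t)) (1/(2*Real.sqrt (1+t0))) t0 := by
    simpa [Function.comp_def] using (Real.hasDerivAt_sqrt h1t0.ne').comp t0 ((hasDerivAt_id t0).const_add 1)
  have h4 := (h3.const_mul (Real.sqrt pa)).add_const P
  have h5 : HasDerivAt (fun t : ℝ => Real.sqrt (Ka+t)) (1/(2*Real.sqrt (Ka+t0))) t0 := by
    simpa [Function.comp_def] using (Real.hasDerivAt_sqrt hd0.ne').comp t0 ((hasDerivAt_id t0).const_add Ka)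
  have hG := h4.div h5 hsT.ne'
  have hF := hA.sub (((hG.const_mul 2).const_sub 2).const_mul lam)
  erw [hF.deriv]
  set sT := Real.sqrt (Ka + t0) with hsTdef
  set sn := Real.sqrt (1 + t0) with hsndef
  rw [show Ka + t0 = sT^2 from hsT2.symm]
  field_simp
  ring


/-- Proposition 3 (second identity, UCT): `a*` maximizes the UCT selection criterion iff
it maximizes the partial derivative (w.r.t. real-valued counts, at the current counts,
with `λ_N^UCT` held fixed) of `q·π̂(m) − λ_N^UCT·D(πθ, π̂(m))`, where
`D(x, y) = 2 − 2·∑ √(x a · y a)`. -/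
theorem uct_selection_is_gradient_ascent
    {A : Type*} [Fintype A] [Nonempty A] [DecidableEq A]
    (n q piTheta : A → ℝ) (c : ℝ)
    (hn : ∀ b, 0 ≤ n b)
    (hN : 1 < ∑ b, n b)
    (hc : 0 < c)
    (hpiTheta : ∀ a, 0 < piTheta a)
    (hpiThetaSum : ∑ a, piTheta a = 1)
    (lam : ℝ)
    (hlam : lam = c * Real.sqrt (Real.log (∑ b, n b) / ((Fintype.card A : ℝ) + ∑ b, n b)))
    (g : A → ℝ)
    (hg : ∀ a, g a = deriv (fun t : ℝ =>
        (∑ b, q b * ((1 + Function.update n a t b) /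
            ((Fintype.card A : ℝ) + ∑ c', Function.update n a t c')))
        - lam * (2 - 2 * ∑ b, Real.sqrt (piTheta b *
            ((1 + Function.update n a t b) /
              ((Fintype.card A : ℝ) + ∑ c', Function.update n a t c'))))) (n a))
    (astar : A) :
    (∀ b, q b + c * Real.sqrt (piTheta b * Real.log (∑ b', n b') / (1 + n b))
        ≤ q astar + c * Real.sqrt (piTheta astar * Real.log (∑ b', n b') / (1 + n astar)))
    ↔ (∀ b, g b ≤ g astar) := by
  classical
  set N : ℝ := ∑ b, n b with hNdef
  set K : ℝ := (Fintype.card A : ℝ) with hKdef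
  set T : ℝ := K + N with hTdef
  have hK1 : (1:ℝ) ≤ K := by
    have h1 : 1 ≤ Fintype.card A := Fintype.card_pos
    rw [hKdef]; exact_mod_cast h1
  have hT : 0 < T := by simp only [hTdef]; linarith
  have hsT : 0 < Real.sqrt T := Real.sqrt_pos.mpr hT
  have hlogN : 0 ≤ Real.log N := Real.log_nonneg hN.le
  have hlamT : lam * Real.sqrt T = c * Real.sqrt (Real.log N) := by
    rw [hlam, Real.sqrt_div hlogN]
    field_simp
  set Qtot : ℝ := ∑ b, q b * (1 + n b) with hQtotdef
  set Ptot : ℝ := ∑ b, Real.sqrt (piTheta b) * Real.sqrt (1 + n b) with hPtotdef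
  set C : ℝ := -(Qtot/T^2) - lam * Ptot/(T * Real.sqrt T) with hCdef
  have key : ∀ a, g a
      = (q a + c * Real.sqrt (piTheta a * Real.log N / (1 + n a))) / T + C := by
    intro a
    set Ra : ℝ := ∑ b ∈ Finset.univ \ {a}, n b with hRadef
    have hRa : 0 ≤ Ra := Finset.sum_nonneg fun b _ => hn b
    have hNsplit : N = n a + Ra := Finset.sum_eq_add_sum_sdiff_singleton_of_mem (Finset.mem_univ a) n
    set Qr : ℝ := ∑ b ∈ Finset.univ \ {a}, q b * (1 + n b) with hQrdef
    set P : ℝ := ∑ b ∈ Finset.univ \ {a}, Real.sqrt (piTheta b) * Real.sqrt (1 + n b) with hPdef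
    have hQsplit : Qtot = q a * (1 + n a) + Qr :=
      Finset.sum_eq_add_sum_sdiff_singleton_of_mem (Finset.mem_univ a) _
    have hPsplit : Ptot = Real.sqrt (piTheta a) * Real.sqrt (1 + n a) + P :=
      Finset.sum_eq_add_sum_sdiff_singleton_of_mem (Finset.mem_univ a) _
    have hKRa : 0 < K + Ra := by linarith
    have hTa : K + Ra + n a = T := by rw [hTdef, hNsplit]; ring
    -- eventual equality of the two functions near n a
    have hev : (fun t : ℝ =>
        (∑ b, q b * ((1 + Function.update n a t b) /
            (K + ∑ c', Function.update n a t c')))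
        - lam * (2 - 2 * ∑ b, Real.sqrt (piTheta b *
            ((1 + Function.update n a t b) /
              (K + ∑ c', Function.update n a t c')))))
        =ᶠ[nhds (n a)] (fun t : ℝ =>
          (q a * (1+t) + Qr)/((K + Ra) + t)
          - lam * (2 - 2*((Real.sqrt (piTheta a) * Real.sqrt (1+t) + P)/Real.sqrt ((K + Ra) + t)))) := by
      have hmem : Set.Ioi (-1 : ℝ) ∈ nhds (n a) := Ioi_mem_nhds (by linarith [hn a])
      filter_upwards [hmem] with t ht
      have hsum : ∑ c', Function.update n a t c' = t + Ra :=
        Finset.sum_update_of_mem (Finset.mem_univ a) n t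
      have hd : K + ∑ c', Function.update n a t c' = (K + Ra) + t := by rw [hsum]; ring
      have hdpos : 0 < (K + Ra) + t := by
        simp only [Set.mem_Ioi] at ht; linarith
      have h1t : 0 < 1 + t := by simp only [Set.mem_Ioi] at ht; linarith
      rw [hd]
      congr 1
      · -- q sum
        rw [show (∑ b, q b * ((1 + Function.update n a t b) / ((K + Ra) + t)))
            = (∑ b, q b * (1 + Function.update n a t b)) / ((K + Ra) + t) by
          rw [Finset.sum_div]; exact Finset.sum_congr rfl fun b _ => (mul_div_assoc _ _ _).symm]
        congr 1
        rw [Finset.sum_eq_add_sum_sdiff_singleton_of_mem (Finset.mem_univ a)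
          (fun b => q b * (1 + Function.update n a t b))]
        rw [Function.update_self]
        have hQs : ∑ b ∈ Finset.univ \ {a}, q b * (1 + Function.update n a t b) = Qr := by
          refine Finset.sum_congr rfl fun b hb => ?_
          have hba : b ≠ a := by simpa using (Finset.mem_sdiff.mp hb).2
          rw [Function.update_of_ne hba]
        rw [hQs]
      · -- sqrt sum
        congr 1
        congr 1
        rw [show (∑ b, Real.sqrt (piTheta b * ((1 + Function.update n a t b) / ((K + Ra) + t))))
            = (∑ b, Real.sqrt (piTheta b) * Real.sqrt (1 + Function.update n a t b))
                / Real.sqrt ((K + Ra) + t) by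
          rw [Finset.sum_div]
          refine Finset.sum_congr rfl fun b _ => ?_
          have hnum : 0 ≤ piTheta b * (1 + Function.update n a t b) := by
            refine mul_nonneg (hpiTheta b).le ?_
            rcases eq_or_ne b a with rfl | hba
            · rw [Function.update_self]; linarith
            · rw [Function.update_of_ne hba]; linarith [hn b]
          rw [← mul_div_assoc, Real.sqrt_div hnum, Real.sqrt_mul (hpiTheta b).le]]
        congr 1
        rw [Finset.sum_eq_add_sum_sdiff_singleton_of_mem (Finset.mem_univ a)
          (fun b => Real.sqrt (piTheta b) * Real.sqrt (1 + Function.update n a t b))]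
        rw [Function.update_self]
        have hPs : ∑ b ∈ Finset.univ \ {a}, Real.sqrt (piTheta b) * Real.sqrt (1 + Function.update n a t b) = P := by
          refine Finset.sum_congr rfl fun b hb => ?_
          have hba : b ≠ a := by simpa using (Finset.mem_sdiff.mp hb).2
          rw [Function.update_of_ne hba]
        rw [hPs]
    have hderiv := uct_aux_deriv (q a) Qr (piTheta a) P (K + Ra) lam (n a) (hn a) hKRa
    rw [hg a, hev.deriv_eq, hderiv, hTa]
    -- now algebra
    have hU : c * Real.sqrt (piTheta a * Real.log N / (1 + n a))
        = c * Real.sqrt (Real.log N) * (Real.sqrt (piTheta a) / Real.sqrt (1 + n a)) := by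
      rw [Real.sqrt_div (mul_nonneg (hpiTheta a).le hlogN), Real.sqrt_mul (hpiTheta a).le]
      ring
    rw [hCdef, hQsplit, hPsplit, hU, ← hlamT]
    ring
  constructor
  · intro h b
    rw [key b, key astar]
    exact add_le_add_left ((div_le_div_iff_of_pos_right hT).mpr (h b)) C
  · intro h b
    have hb := h b
    rw [key b, key astar] at hb
    exact (div_le_div_iff_of_pos_right hT).mp (le_of_add_le_add_right hb)
end

section
/- UCT tracking property: If a* maximizes the UCT selection criterion a ↦ q(a) + c·√(π_θ(a)·log(N)/(1 + n(a))) over 𝒜, then π̂(a*) ≤ π̄_UCT(a*). -/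
/-- UCT tracking property: if `a*` maximizes the UCT selection criterion, then
`π̂(a*) ≤ π̄_UCT(a*)`. -/
theorem uct_pihat_le_pibar
    {A : Type*} [Fintype A] [Nonempty A]
    (n q piTheta : A → ℝ) (c : ℝ)
    (hn : ∀ b, 0 ≤ n b)
    (hN : 1 < ∑ b, n b)
    (hc : 0 < c)
    (hpiTheta : ∀ a, 0 < piTheta a)
    (hpiThetaSum : ∑ a, piTheta a = 1)
    (lam : ℝ)
    (hlam : lam = c * Real.sqrt (Real.log (∑ b, n b) / ((Fintype.card A : ℝ) + ∑ b, n b)))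
    (pihat pibarUCT : A → ℝ)
    (hpihat : ∀ a, pihat a = (1 + n a) / ((Fintype.card A : ℝ) + ∑ b, n b))
    (hpibarPos : ∀ a, 0 < pibarUCT a)
    (hpibarSum : ∑ a, pibarUCT a = 1)
    (α : ℝ)
    (hopt : ∀ a, q a + lam * Real.sqrt (piTheta a / pibarUCT a) = α)
    (astar : A)
    (hastar : ∀ b, q b + c * Real.sqrt (piTheta b * Real.log (∑ b', n b') / (1 + n b))
        ≤ q astar + c * Real.sqrt (piTheta astar * Real.log (∑ b', n b') / (1 + n astar))) :
    pihat astar ≤ pibarUCT astar := by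
  set N : ℝ := ∑ b, n b with hNdef
  set K : ℝ := (Fintype.card A : ℝ) with hKdef
  have hK0 : (0:ℝ) ≤ K := Nat.cast_nonneg _
  have hNpos : (0:ℝ) < N := lt_trans one_pos hN
  have hKN : (0:ℝ) < K + N := by linarith
  have hlog : (0:ℝ) < Real.log N := Real.log_pos hN
  have hlampos : 0 < lam := by
    rw [hlam]
    exact mul_pos hc (Real.sqrt_pos.mpr (div_pos hlog hKN))
  have h1n : ∀ a, (0:ℝ) < 1 + n a := fun a => by have := hn a; linarith
  have hpihatpos : ∀ a, 0 < pihat a := fun a => by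
    rw [hpihat a]; exact div_pos (h1n a) hKN
  have hpihatsum : ∑ a, pihat a = 1 := by
    have : ∑ a, pihat a = (∑ a, (1 + n a)) / (K + N) := by
      rw [Finset.sum_div]; exact Finset.sum_congr rfl fun a _ => hpihat a
    rw [this, Finset.sum_add_distrib, Finset.sum_const, Finset.card_univ,
      nsmul_eq_mul, mul_one]
    field_simp
    rfl
  -- key identity
  have hkey : ∀ a, c * Real.sqrt (piTheta a * Real.log N / (1 + n a))
      = lam * Real.sqrt (piTheta a / pihat a) := by
    intro a
    rw [hlam, hpihat a, mul_assoc]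
    congr 1
    rw [← Real.sqrt_mul (by positivity)]
    congr 1
    have h1 := (h1n a).ne'
    have h2 := hKN.ne'
    field_simp
  classical
  by_contra hcon
  push_neg at hcon
  -- find b with pihat b < pibarUCT b
  have hsum_erase : ∑ x ∈ Finset.univ.erase astar, pihat x
      < ∑ x ∈ Finset.univ.erase astar, pibarUCT x := by
    have h1 : pihat astar + ∑ x ∈ Finset.univ.erase astar, pihat x = 1 := by
      rw [Finset.add_sum_erase _ _ (Finset.mem_univ astar)]; exact hpihatsum
    have h2 : pibarUCT astar + ∑ x ∈ Finset.univ.erase astar, pibarUCT x = 1 := by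
      rw [Finset.add_sum_erase _ _ (Finset.mem_univ astar)]; exact hpibarSum
    linarith
  obtain ⟨b, hb, hblt⟩ := Finset.exists_lt_of_sum_lt hsum_erase
  -- strict monotonicity facts
  have hs1 : Real.sqrt (piTheta astar / pihat astar)
      < Real.sqrt (piTheta astar / pibarUCT astar) := by
    apply Real.sqrt_lt_sqrt (div_nonneg (hpiTheta astar).le (hpihatpos astar).le)
    exact div_lt_div_of_pos_left (hpiTheta astar) (hpibarPos astar) hcon
  have hs2 : Real.sqrt (piTheta b / pibarUCT b)
      < Real.sqrt (piTheta b / pihat b) := by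
    apply Real.sqrt_lt_sqrt (div_nonneg (hpiTheta b).le (hpibarPos b).le)
    exact div_lt_div_of_pos_left (hpiTheta b) (hpihatpos b) hblt
  have hF : q b + lam * Real.sqrt (piTheta b / pihat b)
      ≤ q astar + lam * Real.sqrt (piTheta astar / pihat astar) := by
    have := hastar b
    rwa [hkey b, hkey astar] at this
  have e1 := hopt astar
  have e2 := hopt b
  nlinarith [mul_lt_mul_of_pos_left hs1 hlampos, mul_lt_mul_of_pos_left hs2 hlampos]
end

section
/- Proposition (computation of π̄, part iii): Let α ∈ ℝ satisfy α > q(b) for all b, and suppose ∑_b λ·π_θ(b)/(α − q(b)) = 1. Then α ≤ max_b q(b) + λ. -/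
/-- Computation of π̄, part (iii): the normalizing constant `α` satisfies
`α ≤ max_b q b + λ`. -/
theorem pibar_alpha_upper_bound
    {A : Type*} [Fintype A] [Nonempty A]
    (q piTheta : A → ℝ) (lam α : ℝ)
    (hpiTheta : ∀ a, 0 < piTheta a)
    (hpiThetaSum : ∑ a, piTheta a = 1)
    (hlam : 0 < lam)
    (hα : ∀ b, q b < α)
    (hnorm : ∑ b, lam * piTheta b / (α - q b) = 1) :
    α ≤ Finset.univ.sup' Finset.univ_nonempty q + lam := by
  set M := Finset.univ.sup' Finset.univ_nonempty q with hM
  obtain ⟨b0, -, hb0⟩ := Finset.exists_mem_eq_sup' Finset.univ_nonempty q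
  have hMα : M < α := by rw [hM, hb0]; exact hα b0
  have hpos : 0 < α - M := by linarith
  have hle : (1 : ℝ) ≤ lam / (α - M) := by
    calc (1 : ℝ) = ∑ b, lam * piTheta b / (α - q b) := hnorm.symm
    _ ≤ ∑ b, lam * piTheta b / (α - M) := by
        apply Finset.sum_le_sum
        intro b _
        apply div_le_div_of_nonneg_left
        · have := (hpiTheta b).le; positivity
        · exact hpos
        · have : q b ≤ M := Finset.le_sup' q (Finset.mem_univ b)
          linarith
    _ = lam / (α - M) := by
        rw [← Finset.sum_div, ← Finset.mul_sum, hpiThetaSum, mul_one]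
  have := (one_le_div hpos).mp hle
  linarith
end

section
/- Lemma 2: An action a maximizes the function a ↦ ∂/∂n(a) [ q·π̂(m) − λ·D_f(π̂(m), π_θ) ] evaluated at m = n (where the counts m : 𝒜 → ℝ are extended to real values, π̂(m)(b) = (1 + m(b))/(|𝒜| + ∑_c m(c)), and the partial derivative is taken coordinatewise in m(a)) if and only if a maximizes the function a ↦ q(a) − λ·f'(π̂(a)/π_θ(a)), where π̂ = π̂(n). -/
/-- Lemma 2: `a` maximizes the partial derivative (w.r.t. real-valued counts, at the
current counts) of `m ↦ q·π̂(m) − λ·D_f(π̂(m), πθ)` iff it maximizes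
`a ↦ q a − λ·f'(π̂ a/πθ a)`. -/
theorem argmax_partial_derivative_f_divergence
    {A : Type*} [Fintype A] [Nonempty A] [DecidableEq A]
    (n q piTheta : A → ℝ) (lam : ℝ) (f f' : ℝ → ℝ)
    (hn : ∀ b, 0 ≤ n b)
    (hpiTheta : ∀ a, 0 < piTheta a)
    (hf : ∀ x > 0, HasDerivAt f (f' x) x)
    (pihat : A → ℝ)
    (hpihat : ∀ a, pihat a = (1 + n a) / ((Fintype.card A : ℝ) + ∑ b, n b))
    (g : A → ℝ)
    (hg : ∀ a, g a = deriv (fun t : ℝ =>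
        (∑ b, q b * ((1 + Function.update n a t b) /
            ((Fintype.card A : ℝ) + ∑ c', Function.update n a t c')))
        - lam * ∑ b, piTheta b * f (((1 + Function.update n a t b) /
            ((Fintype.card A : ℝ) + ∑ c', Function.update n a t c')) / piTheta b)) (n a))
    (astar : A) :
    (∀ b, g b ≤ g astar)
    ↔ (∀ b, q b - lam * f' (pihat b / piTheta b)
        ≤ q astar - lam * f' (pihat astar / piTheta astar)) := by
  classical
  set S : ℝ := (Fintype.card A : ℝ) + ∑ b, n b with hS
  have hSpos : 0 < S := by
    have h1 : (1:ℝ) ≤ (Fintype.card A : ℝ) := by exact_mod_cast Fintype.card_pos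
    have h2 : 0 ≤ ∑ b, n b := Finset.sum_nonneg fun b _ => hn b
    rw [hS]; linarith
  have hSne : S ≠ 0 := ne_of_gt hSpos
  have hpihat_pos : ∀ b, 0 < pihat b := by
    intro b
    rw [hpihat]
    exact div_pos (by linarith [hn b]) hSpos
  set h : A → ℝ := fun b => q b - lam * f' (pihat b / piTheta b) with hh
  set C : ℝ := ∑ b, h b * (1 + n b) / S ^ 2 with hC
  have key : ∀ a, g a = h a / S - C := by
    intro a
    -- derivative of the denominator
    have hden : HasDerivAt (fun t : ℝ =>
        (Fintype.card A : ℝ) + ∑ c', Function.update n a t c') 1 (n a) := by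
      have heq : (fun t : ℝ => (Fintype.card A : ℝ) + ∑ c', Function.update n a t c')
          = fun t : ℝ => ((Fintype.card A : ℝ) + ∑ c' ∈ Finset.univ \ {a}, n c') + t := by
        funext t
        rw [Finset.sum_update_of_mem (Finset.mem_univ a)]
        ring
      rw [heq]
      simpa using (hasDerivAt_id (n a)).const_add
        ((Fintype.card A : ℝ) + ∑ c' ∈ Finset.univ \ {a}, n c')
    have hdval : ((Fintype.card A : ℝ) + ∑ c', Function.update n a (n a) c') = S := by
      simp [Function.update_eq_self, hS]
    have hp : ∀ b, HasDerivAt (fun t : ℝ => (1 + Function.update n a t b) /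
        ((Fintype.card A : ℝ) + ∑ c', Function.update n a t c'))
        (((if b = a then (1:ℝ) else 0) * S - (1 + n b) * 1) / S ^ 2) (n a) := by
      intro b
      have hnum : HasDerivAt (fun t : ℝ => 1 + Function.update n a t b)
          (if b = a then (1:ℝ) else 0) (n a) := by
        by_cases hba : b = a
        · subst hba
          simp only [Function.update_self, if_pos rfl]
          simpa using (hasDerivAt_id (n b)).const_add 1
        · simp only [Function.update_of_ne hba, if_neg hba]
          exact hasDerivAt_const _ _
      have hd := hnum.fun_div hden (by rw [hdval]; exact hSne)
      rw [hdval, Function.update_eq_self] at hd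
      exact hd
    have hval : ∀ b, (1 + Function.update n a (n a) b) /
        ((Fintype.card A : ℝ) + ∑ c', Function.update n a (n a) c') = pihat b := by
      intro b
      rw [hpihat]
      simp [Function.update_eq_self, hS]
    have hsum1 : HasDerivAt (fun t : ℝ => ∑ b, q b * ((1 + Function.update n a t b) /
        ((Fintype.card A : ℝ) + ∑ c', Function.update n a t c')))
        (∑ b, q b * (((if b = a then (1:ℝ) else 0) * S - (1 + n b) * 1) / S ^ 2)) (n a) :=
      HasDerivAt.fun_sum fun b _ => (hp b).const_mul (q b)
    have hsum2 : HasDerivAt (fun t : ℝ => ∑ b, piTheta b * f (((1 + Function.update n a t b) /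
        ((Fintype.card A : ℝ) + ∑ c', Function.update n a t c')) / piTheta b))
        (∑ b, piTheta b * (f' (pihat b / piTheta b) *
          ((((if b = a then (1:ℝ) else 0) * S - (1 + n b) * 1) / S ^ 2) / piTheta b))) (n a) := by
      refine HasDerivAt.fun_sum fun b _ => HasDerivAt.const_mul _ ?_
      have hinner : HasDerivAt (fun t : ℝ => ((1 + Function.update n a t b) /
          ((Fintype.card A : ℝ) + ∑ c', Function.update n a t c')) / piTheta b)
          ((((if b = a then (1:ℝ) else 0) * S - (1 + n b) * 1) / S ^ 2) / piTheta b) (n a) :=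
        (hp b).div_const _
      have hx : 0 < pihat b / piTheta b := div_pos (hpihat_pos b) (hpiTheta b)
      have hfb : HasDerivAt f (f' (pihat b / piTheta b))
          (((1 + Function.update n a (n a) b) /
            ((Fintype.card A : ℝ) + ∑ c', Function.update n a (n a) c')) / piTheta b) := by
        rw [hval b]
        exact hf _ hx
      have hcomp := hfb.comp (n a) hinner
      simpa [Function.comp_def] using hcomp
    have htot := hsum1.sub (hsum2.const_mul lam)
    have hderiv : g a = (∑ b, q b * (((if b = a then (1:ℝ) else 0) * S - (1 + n b) * 1) / S ^ 2))
        - lam * ∑ b, piTheta b * (f' (pihat b / piTheta b) *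
          ((((if b = a then (1:ℝ) else 0) * S - (1 + n b) * 1) / S ^ 2) / piTheta b)) := by
      rw [hg a]
      exact htot.deriv
    rw [hderiv]
    have step1 : (∑ b, q b * (((if b = a then (1:ℝ) else 0) * S - (1 + n b) * 1) / S ^ 2))
        - lam * ∑ b, piTheta b * (f' (pihat b / piTheta b) *
          ((((if b = a then (1:ℝ) else 0) * S - (1 + n b) * 1) / S ^ 2) / piTheta b))
        = ∑ b, h b * (((if b = a then (1:ℝ) else 0) * S - (1 + n b) * 1) / S ^ 2) := by
      rw [Finset.mul_sum, ← Finset.sum_sub_distrib]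
      refine Finset.sum_congr rfl fun b _ => ?_
      have hne := (hpiTheta b).ne'
      simp only [hh]
      field_simp
    rw [step1]
    have expand : ∀ b, h b * (((if b = a then (1:ℝ) else 0) * S - (1 + n b) * 1) / S ^ 2)
        = (if b = a then h b / S else 0) - h b * (1 + n b) / S ^ 2 := by
      intro b
      by_cases hba : b = a
      · simp only [hba, if_pos rfl, ↓reduceIte]
        field_simp
      · simp only [if_neg hba]
        ring
    simp_rw [expand]
    rw [Finset.sum_sub_distrib, Finset.sum_ite_eq' Finset.univ a (fun b => h b / S)]
    simp [hC]
  have hiff : ∀ x y : ℝ, (x / S - C ≤ y / S - C) ↔ x ≤ y := fun x y => by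
    rw [sub_le_sub_iff_right, div_le_div_iff_of_pos_right hSpos]
  simp_rw [key]
  exact forall_congr' fun b => hiff _ _
end

section
/- Lemma 4: Suppose there exists α ∈ ℝ such that q(a) − λ·f'(π̄_f(a)/π_θ(a)) = α for all actions a, and let a*_f be an action maximizing a ↦ q(a) − λ·f'(π̂(a)/π_θ(a)) over 𝒜. Then π̂(a*_f) ≤ π̄_f(a*_f). -/
/-- Lemma 4: under the first-order optimality condition for `π̄_f`, any action `a*_f`
maximizing `a ↦ q a − λ·f'(π̂ a/πθ a)` satisfies `π̂(a*_f) ≤ π̄_f(a*_f)`. -/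
theorem pihat_le_pibar_of_argmax
    {A : Type*} [Fintype A] [Nonempty A]
    (q piTheta : A → ℝ) (lam : ℝ) (f' : ℝ → ℝ)
    (hpiTheta : ∀ a, 0 < piTheta a)
    (hlam : 0 < lam)
    (hf' : StrictMono f')
    (pihat pibarf : A → ℝ)
    (hpihatPos : ∀ a, 0 < pihat a) (hpihatNonneg : ∀ a, 0 ≤ pihat a)
    (hpihatSum : ∑ a, pihat a = 1)
    (hpibarPos : ∀ a, 0 < pibarf a) (hpibarNonneg : ∀ a, 0 ≤ pibarf a)
    (hpibarSum : ∑ a, pibarf a = 1)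
    (α : ℝ)
    (hopt : ∀ a, q a - lam * f' (pibarf a / piTheta a) = α)
    (astarf : A)
    (hastar : ∀ b, q b - lam * f' (pihat b / piTheta b)
        ≤ q astarf - lam * f' (pihat astarf / piTheta astarf)) :
    pihat astarf ≤ pibarf astarf := by
  by_contra h
  push_neg at h
  -- there exists b with pihat b < pibarf b
  obtain ⟨b, hb⟩ : ∃ b, pihat b < pibarf b := by
    by_contra hall
    push_neg at hall
    have hlt : ∑ a, pibarf a < ∑ a, pihat a :=
      Finset.sum_lt_sum (fun a _ => hall a) ⟨astarf, Finset.mem_univ _, h⟩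
    rw [hpibarSum, hpihatSum] at hlt
    exact lt_irrefl _ hlt
  have hstar : q astarf - lam * f' (pihat astarf / piTheta astarf) < α := by
    have hfs : f' (pibarf astarf / piTheta astarf) < f' (pihat astarf / piTheta astarf) :=
      hf' (by gcongr; exact hpiTheta astarf)
    nlinarith [hopt astarf]
  have hbgt : α < q b - lam * f' (pihat b / piTheta b) := by
    have hfs : f' (pihat b / piTheta b) < f' (pibarf b / piTheta b) :=
      hf' (by gcongr; exact hpiTheta b)
    nlinarith [hopt b]
  exact absurd (hastar b) (not_le.mpr (hstar.trans hbgt))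
end

section
/- Tracking proposition (constant target): Suppose that for all rounds t ≥ 1 the selected action a_t satisfies p_t(a_t) ≤ π(a_t). Then for every action a and every round t ≥ 1, |π(a) − p_t(a)| ≤ (|𝒜| − 1)/(|𝒜| + t). -/
/-- Tracking proposition (constant target): if at every round `t ≥ 1` the selected
action `a_t` satisfies `p_t(a_t) ≤ π(a_t)`, then for every action `a` and round `t ≥ 1`,
`|π(a) − p_t(a)| ≤ (|𝒜| − 1)/(|𝒜| + t)`. -/
theorem tracking_constant_target
    {A : Type*} [Fintype A] [Nonempty A] [DecidableEq A]
    (pi : A → ℝ) (hpi : ∀ a, 0 ≤ pi a) (hsum : ∑ a, pi a = 1)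
    (act : ℕ → A)
    (p : ℕ → A → ℝ)
    (hp : ∀ t a, p t a =
        ((((Finset.Icc 1 t).filter (fun i => act i = a)).card : ℝ) + 1)
          / ((Fintype.card A : ℝ) + t))
    (hsel : ∀ t, 1 ≤ t → p t (act t) ≤ pi (act t)) :
    ∀ a, ∀ t, 1 ≤ t →
      |pi a - p t a| ≤ ((Fintype.card A : ℝ) - 1) / ((Fintype.card A : ℝ) + t) := by
  have hK1 : 1 ≤ Fintype.card A := Fintype.card_pos
  have hKpos : (0:ℝ) < Fintype.card A := by exact_mod_cast Fintype.card_pos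
  -- upper bound by induction
  have upper : ∀ t a, p t a ≤ pi a + 1 / ((Fintype.card A : ℝ) + t) := by
    intro t
    induction t with
    | zero =>
      intro a
      rw [hp]
      have he : (Finset.Icc 1 0).filter (fun i => act i = a) = ∅ := by simp
      rw [he]
      simp only [Finset.card_empty, Nat.cast_zero, zero_add, add_zero]
      linarith [hpi a]
    | succ t ih =>
      intro a
      by_cases h : act (t+1) = a
      · have h1 := hsel (t+1) (by omega)
        rw [h] at h1
        have h2 : (0:ℝ) ≤ 1 / ((Fintype.card A : ℝ) + ((t:ℕ)+1 : ℕ)) := by positivity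
        linarith
      · have hc : ((Finset.Icc 1 (t+1)).filter (fun i => act i = a)).card
            = ((Finset.Icc 1 t).filter (fun i => act i = a)).card := by
          rw [← Finset.insert_Icc_right_eq_Icc_add_one (by omega), Finset.filter_insert, if_neg h]
        have ih' := ih a
        rw [hp] at ih' ⊢
        rw [hc]
        set n : ℝ := (((Finset.Icc 1 t).filter (fun i => act i = a)).card : ℝ) with hn
        have ht0 : (0:ℝ) < (Fintype.card A : ℝ) + t := by positivity
        have ht1 : (0:ℝ) < (Fintype.card A : ℝ) + ((t+1 : ℕ) : ℝ) := by positivity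
        rw [div_le_iff₀ ht0] at ih'
        rw [div_le_iff₀ ht1]
        have e1 : (pi a + 1 / ((Fintype.card A : ℝ) + t)) * ((Fintype.card A : ℝ) + t)
            = pi a * ((Fintype.card A : ℝ) + t) + 1 := by field_simp
        have e2 : (pi a + 1 / ((Fintype.card A : ℝ) + ((t+1 : ℕ) : ℝ)))
              * ((Fintype.card A : ℝ) + ((t+1 : ℕ) : ℝ))
            = pi a * ((Fintype.card A : ℝ) + ((t+1 : ℕ) : ℝ)) + 1 := by field_simp
        rw [e2]
        rw [e1] at ih'
        have hpa := hpi a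
        push_cast
        nlinarith
  -- p sums to 1
  have hsumP : ∀ t, ∑ b, p t b = 1 := by
    intro t
    have hcard : ∑ b, (((Finset.Icc 1 t).filter (fun i => act i = b)).card) = t := by
      rw [← Finset.card_eq_sum_card_fiberwise (f := act) (s := Finset.Icc 1 t)
        (t := Finset.univ) (fun i _ => Finset.mem_univ _)]
      simp
    have htpos : (0:ℝ) < (Fintype.card A : ℝ) + t := by positivity
    calc ∑ b, p t b = ∑ b, ((((Finset.Icc 1 t).filter (fun i => act i = b)).card : ℝ) + 1)
          / ((Fintype.card A : ℝ) + t) := by simp_rw [hp]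
      _ = (∑ b, ((((Finset.Icc 1 t).filter (fun i => act i = b)).card : ℝ) + 1))
          / ((Fintype.card A : ℝ) + t) := by rw [Finset.sum_div]
      _ = 1 := by
          rw [Finset.sum_add_distrib, Finset.sum_const, Finset.card_univ, nsmul_eq_mul,
            mul_one]
          rw [div_eq_one_iff_eq (ne_of_gt htpos)]
          rw [← Nat.cast_sum]
          rw [hcard]
          ring
  intro a t ht
  have htpos : (0:ℝ) < (Fintype.card A : ℝ) + t := by positivity
  rw [abs_sub_le_iff]
  constructor
  · -- pi a - p t a ≤ (K-1)/(K+t)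
    have key : pi a - p t a = ∑ b ∈ Finset.univ.erase a, (p t b - pi b) := by
      have h1 : ∑ b, (p t b - pi b) = 0 := by
        rw [Finset.sum_sub_distrib, hsumP, hsum]; ring
      have h2 : ∑ b, (p t b - pi b)
          = (p t a - pi a) + ∑ b ∈ Finset.univ.erase a, (p t b - pi b) := by
        rw [← Finset.add_sum_erase _ _ (Finset.mem_univ a)]
      linarith
    rw [key]
    have hbd : ∀ b ∈ Finset.univ.erase a, p t b - pi b ≤ 1 / ((Fintype.card A : ℝ) + t) := by
      intro b _
      have := upper t b
      linarith
    calc ∑ b ∈ Finset.univ.erase a, (p t b - pi b)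
        ≤ ∑ b ∈ Finset.univ.erase a, 1 / ((Fintype.card A : ℝ) + t) :=
          Finset.sum_le_sum hbd
      _ = ((Fintype.card A : ℝ) - 1) / ((Fintype.card A : ℝ) + t) := by
          rw [Finset.sum_const, Finset.card_erase_of_mem (Finset.mem_univ a),
            Finset.card_univ, nsmul_eq_mul]
          have : ((Fintype.card A - 1 : ℕ) : ℝ) = (Fintype.card A : ℝ) - 1 := by
            push_cast [hK1]; ring
          rw [this]
          ring
  · -- p t a - pi a ≤ (K-1)/(K+t)
    rcases eq_or_lt_of_le hK1 with hEq | hK2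
    · -- card = 1 : p t a = pi a = 1
      have hone : Fintype.card A = 1 := hEq.symm
      have hall : ∀ b : A, b = a := by
        intro b
        exact Fintype.card_le_one_iff.mp (le_of_eq hone) b a
      have hpa : pi a = 1 := by
        rw [← hsum, Fintype.sum_eq_single a (fun b hb => absurd (hall b) hb)]
      have hfull : (Finset.Icc 1 t).filter (fun i => act i = a) = Finset.Icc 1 t := by
        apply Finset.filter_true_of_mem
        intro i _
        exact hall (act i)
      have hpta : p t a = 1 := by
        rw [hp, hfull, Nat.card_Icc]
        rw [hone]
        push_cast
        field_simp
        ring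
      rw [hpa, hpta, hone]
      norm_num
    · have hu := upper t a
      have h2 : (1:ℝ) ≤ (Fintype.card A : ℝ) - 1 := by
        have : (2:ℕ) ≤ Fintype.card A := hK2
        have : (2:ℝ) ≤ Fintype.card A := by exact_mod_cast this
        linarith
      have h3 : (1:ℝ) / ((Fintype.card A : ℝ) + t)
          ≤ ((Fintype.card A : ℝ) - 1) / ((Fintype.card A : ℝ) + t) := by
        gcongr
      linarith
end

section
/- Upper tracking bound: Suppose that for all rounds t ≥ 1 the selected action a_t satisfies p_t(a_t) ≤ π(a_t). Then for every action a and every round t ≥ 1, p_t(a) ≤ π(a) + 1/(|𝒜| + t). -/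
/-- Upper tracking bound: if at every round `t ≥ 1` the selected action `a_t` satisfies
`p_t(a_t) ≤ π(a_t)`, then for every action `a` and round `t ≥ 1`,
`p_t(a) ≤ π(a) + 1/(|𝒜| + t)`. -/
theorem tracking_upper_bound
    {A : Type*} [Fintype A] [Nonempty A] [DecidableEq A]
    (pi : A → ℝ) (hpi : ∀ a, 0 ≤ pi a) (hsum : ∑ a, pi a = 1)
    (act : ℕ → A)
    (p : ℕ → A → ℝ)
    (hp : ∀ t a, p t a =
        ((((Finset.Icc 1 t).filter (fun i => act i = a)).card : ℝ) + 1)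
          / ((Fintype.card A : ℝ) + t))
    (hsel : ∀ t, 1 ≤ t → p t (act t) ≤ pi (act t)) :
    ∀ a, ∀ t, 1 ≤ t →
      p t a ≤ pi a + 1 / ((Fintype.card A : ℝ) + t) := by
  have hcard : (1:ℝ) ≤ (Fintype.card A : ℝ) := by
    exact_mod_cast Fintype.card_pos (α := A)
  intro a
  have key : ∀ t, (((Finset.Icc 1 t).filter (fun i => act i = a)).card : ℝ)
      ≤ pi a * ((Fintype.card A : ℝ) + t) := by
    intro t
    induction t with
    | zero =>
        simp only [Nat.cast_zero, add_zero]
        have : Finset.Icc 1 0 = (∅ : Finset ℕ) := by simp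
        rw [this]
        simp only [Finset.filter_empty, Finset.card_empty, Nat.cast_zero]
        exact mul_nonneg (hpi a) (by linarith)
    | succ t ih =>
        have hIcc : Finset.Icc 1 (t+1) = insert (t+1) (Finset.Icc 1 t) := by
          ext x; simp [Finset.mem_Icc]; omega
        have hden : (0:ℝ) < (Fintype.card A : ℝ) + (t+1:ℕ) := by
          push_cast; linarith
        have hnotmem : (t+1) ∉ Finset.Icc 1 t := by simp
        by_cases h : act (t+1) = a
        · have hsel' := hsel (t+1) (by omega)
          rw [hp, h] at hsel'
          rw [div_le_iff₀ hden] at hsel'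
          linarith
        · have hcards : ((Finset.Icc 1 (t+1)).filter (fun i => act i = a)).card
              = ((Finset.Icc 1 t).filter (fun i => act i = a)).card := by
            rw [hIcc, Finset.filter_insert, if_neg h]
          rw [hcards]
          have hmono : pi a * ((Fintype.card A:ℝ) + t) ≤ pi a * ((Fintype.card A:ℝ) + (t+1:ℕ)) := by
            apply mul_le_mul_of_nonneg_left _ (hpi a)
            push_cast; linarith
          linarith
  intro t ht
  rw [hp]
  have hden : (0:ℝ) < (Fintype.card A : ℝ) + t := by
    have : (0:ℝ) ≤ (t:ℝ) := Nat.cast_nonneg t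
    linarith
  rw [div_le_iff₀ hden]
  have hexp : (pi a + 1 / ((Fintype.card A : ℝ) + t)) * ((Fintype.card A : ℝ) + t)
      = pi a * ((Fintype.card A : ℝ) + t) + 1 := by
    field_simp
  rw [hexp]
  linarith [key t]
end

section
/- Lower tracking bound: Suppose that for all rounds t ≥ 1 the selected action a_t satisfies p_t(a_t) ≤ π(a_t). Then for every action a and every round t ≥ 1, p_t(a) ≥ π(a) − (|𝒜| − 1)/(|𝒜| + t). -/
/-- Lower tracking bound: if at every round `t ≥ 1` the selected action `a_t` satisfies
`p_t(a_t) ≤ π(a_t)`, then for every action `a` and round `t ≥ 1`,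
`p_t(a) ≥ π(a) − (|𝒜| − 1)/(|𝒜| + t)`. -/
theorem tracking_lower_bound
    {A : Type*} [Fintype A] [Nonempty A] [DecidableEq A]
    (pi : A → ℝ) (hpi : ∀ a, 0 ≤ pi a) (hsum : ∑ a, pi a = 1)
    (act : ℕ → A)
    (p : ℕ → A → ℝ)
    (hp : ∀ t a, p t a =
        ((((Finset.Icc 1 t).filter (fun i => act i = a)).card : ℝ) + 1)
          / ((Fintype.card A : ℝ) + t))
    (hsel : ∀ t, 1 ≤ t → p t (act t) ≤ pi (act t)) :
    ∀ a, ∀ t, 1 ≤ t →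
      pi a - ((Fintype.card A : ℝ) - 1) / ((Fintype.card A : ℝ) + t) ≤ p t a := by
  have hN : (1:ℝ) ≤ (Fintype.card A : ℝ) := by exact_mod_cast Fintype.card_pos
  -- key upper bound: n_s(b) ≤ (|A|+s) * pi b
  have key : ∀ s : ℕ, ∀ b : A,
      ((((Finset.Icc 1 s).filter (fun i => act i = b)).card : ℝ))
        ≤ ((Fintype.card A : ℝ) + s) * pi b := by
    intro s
    induction s with
    | zero =>
        intro b
        simp only [Nat.cast_zero, add_zero]
        have : Finset.Icc 1 0 = (∅ : Finset ℕ) := by simp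
        rw [this]
        simp
        have := hpi b
        nlinarith
    | succ t ih =>
        intro b
        have hsplit : Finset.Icc 1 (t+1) = insert (t+1) (Finset.Icc 1 t) := by
          ext x
          simp only [Finset.mem_Icc, Finset.mem_insert]
          omega
        by_cases hb : act (t+1) = b
        · have h1 := hsel (t+1) (by omega)
          rw [hp, hb] at h1
          have hpos : (0:ℝ) < (Fintype.card A : ℝ) + ((t:ℝ)+1) := by linarith
          have h2 := (div_le_iff₀ hpos).mp (by
            push_cast at h1; exact h1)
          push_cast at h2 ⊢
          nlinarith
        · have heq : (Finset.Icc 1 (t+1)).filter (fun i => act i = b)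
              = (Finset.Icc 1 t).filter (fun i => act i = b) := by
            rw [hsplit, Finset.filter_insert, if_neg hb]
          rw [heq]
          have := ih b
          have := hpi b
          push_cast at *
          nlinarith
  intro a t ht
  -- sum of counts is t
  have hsumn : ∑ b : A, (((Finset.Icc 1 t).filter (fun i => act i = b)).card) = t := by
    have := Finset.card_eq_sum_card_fiberwise
      (f := act) (s := Finset.Icc 1 t) (t := Finset.univ)
      (fun x _ => Finset.mem_univ _)
    rw [Nat.card_Icc] at this
    omega
  set n : A → ℝ := fun b => (((Finset.Icc 1 t).filter (fun i => act i = b)).card : ℝ) with hn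
  have hsumn' : ∑ b : A, n b = (t : ℝ) := by
    simp only [hn]
    exact_mod_cast hsumn
  have hmem : a ∈ (Finset.univ : Finset A) := Finset.mem_univ a
  have hsplit1 : n a + ∑ b ∈ Finset.univ.erase a, n b = (t : ℝ) := by
    rw [Finset.add_sum_erase _ _ hmem, hsumn']
  have hsplit2 : pi a + ∑ b ∈ Finset.univ.erase a, pi b = 1 := by
    rw [Finset.add_sum_erase _ _ hmem, hsum]
  have hkeysum : ∑ b ∈ Finset.univ.erase a, n b
      ≤ ((Fintype.card A : ℝ) + t) * ∑ b ∈ Finset.univ.erase a, pi b := by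
    rw [Finset.mul_sum]
    exact Finset.sum_le_sum (fun b _ => key t b)
  have hpos : (0:ℝ) < (Fintype.card A : ℝ) + t := by
    have : (0:ℝ) ≤ (t:ℝ) := Nat.cast_nonneg t
    linarith
  have main : ((Fintype.card A : ℝ) + t) * pi a - ((Fintype.card A : ℝ) - 1)
      ≤ n a + 1 := by nlinarith
  rw [hp]
  rw [sub_le_iff_le_add, ← add_div, le_div_iff₀ hpos]
  show pi a * ((Fintype.card A : ℝ) + ↑t) ≤ n a + 1 + ((Fintype.card A : ℝ) - 1)
  linarith
end
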